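/- arXiv:2009.00669 — 2 statements merged into one kernel-verified Lean document; each statement's English description precedes it below -/
import Mathlib

section
/- The Jaccard distance d(A,B) = 1 − |A ∩ B| / |A ∪ B| (with d(∅,∅) = 0) defines a metric on the collection of finite subsets of a given type; in particular it satisfies the triangle inequality d(A,C) ≤ d(A,B) + d(B,C). -/
open scoped symmDiff

/-- Jaccard distance on finite sets, with `jaccard ∅ ∅ = 0`. -/
noncomputable def jaccard {α : Type*} [DecidableEq α] (A B : Finset α) : ℝ :=
  if A ∪ B = ∅ then 0 else 1 - ((A ∩ B).card : ℝ) / ((A ∪ B).card : ℝ)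

private lemma card_symmDiff_fin {α : Type*} [DecidableEq α] (A B : Finset α) :
    (A ∆ B).card = (A ∪ B).card - (A ∩ B).card := by
  rw [symmDiff_eq_sup_sdiff_inf]
  exact Finset.card_sdiff_of_subset Finset.inter_subset_union

private lemma symmDiff_tri {α : Type*} [DecidableEq α] (A B C : Finset α) :
    ((A ∆ C).card : ℝ) ≤ (A ∆ B).card + (B ∆ C).card := by
  have h : (A ∆ C).card ≤ (A ∆ B).card + (B ∆ C).card :=
    calc (A ∆ C).card ≤ ((A ∆ B) ∪ (B ∆ C)).card :=
          Finset.card_le_card (symmDiff_triangle A B C)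
      _ ≤ (A ∆ B).card + (B ∆ C).card := Finset.card_union_le _ _
  exact_mod_cast h

private lemma card_le_card_add_symmDiff {α : Type*} [DecidableEq α] (A B : Finset α) :
    ((B.card : ℝ)) ≤ A.card + (A ∆ B).card := by
  have h : B.card ≤ A.card + (A ∆ B).card := by
    calc B.card ≤ (A ∪ (A ∆ B)).card := by
          apply Finset.card_le_card
          intro x hx
          by_cases hA : x ∈ A
          · exact Finset.mem_union_left _ hA
          · refine Finset.mem_union_right _ ?_
            simp [Finset.mem_symmDiff, hA, hx]
      _ ≤ A.card + (A ∆ B).card := Finset.card_union_le _ _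
  exact_mod_cast h

private lemma key_ineq (a b c p q r : ℝ) (ha : 0 ≤ a) (hc : 0 ≤ c)
    (hq : 0 ≤ q) (hr : 0 ≤ r)
    (hpd : 0 < a + c + p) (hqd : 0 < a + b + q) (hrd : 0 < b + c + r)
    (h1 : p ≤ q + r) (h2 : b ≤ a + q) (h3 : b ≤ c + r) :
    2 * p / (a + c + p) ≤ 2 * q / (a + b + q) + 2 * r / (b + c + r) := by
  have hD : 0 < a + c + q + r := by linarith
  have step1 : 2 * p / (a + c + p) ≤ 2 * (q + r) / (a + c + q + r) := by
    rw [div_le_div_iff₀ hpd hD]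
    nlinarith [mul_nonneg (add_nonneg ha hc) (sub_nonneg.mpr h1)]
  have step2 : 2 * q / (a + c + q + r) ≤ 2 * q / (a + b + q) :=
    div_le_div_of_nonneg_left (by linarith) hqd (by linarith)
  have step3 : 2 * r / (a + c + q + r) ≤ 2 * r / (b + c + r) :=
    div_le_div_of_nonneg_left (by linarith) hrd (by linarith)
  have heq : 2 * (q + r) / (a + c + q + r) =
      2 * q / (a + c + q + r) + 2 * r / (a + c + q + r) := by ring
  linarith

private lemma jaccard_eq {α : Type*} [DecidableEq α] (A B : Finset α) (h : A ∪ B ≠ ∅) :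
    jaccard A B = 2 * ((A ∆ B).card : ℝ) / (A.card + B.card + (A ∆ B).card) := by
  have hi : (A ∩ B).card ≤ (A ∪ B).card :=
    Finset.card_le_card Finset.inter_subset_union
  have hcard : (A ∪ B).card + (A ∩ B).card = A.card + B.card :=
    Finset.card_union_add_card_inter A B
  have hu : 0 < ((A ∪ B).card : ℝ) := by
    have h2 : 0 < (A ∪ B).card := Finset.card_pos.mpr (Finset.nonempty_of_ne_empty h)
    exact_mod_cast h2
  have hsd : ((A ∆ B).card : ℝ) = (A ∪ B).card - (A ∩ B).card := by
    rw [card_symmDiff_fin, Nat.cast_sub hi]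
  have hab : (A.card : ℝ) + B.card = (A ∪ B).card + (A ∩ B).card := by exact_mod_cast hcard.symm
  rw [jaccard, if_neg h, hsd, hab]
  have hdenom : ((A ∪ B).card : ℝ) + (A ∩ B).card + ((A ∪ B).card - (A ∩ B).card)
      = 2 * (A ∪ B).card := by ring
  rw [hdenom]
  field_simp

theorem stmt_2 {α : Type*} [DecidableEq α] :
    (∀ A : Finset α, jaccard A A = 0) ∧
    (∀ A B : Finset α, jaccard A B = 0 → A = B) ∧
    (∀ A B : Finset α, jaccard A B = jaccard B A) ∧
    (∀ A B : Finset α, 0 ≤ jaccard A B) ∧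
    (∀ A B C : Finset α, jaccard A C ≤ jaccard A B + jaccard B C) := by
  have nonneg : ∀ A B : Finset α, 0 ≤ jaccard A B := by
    intro A B
    rw [jaccard]
    split
    · exact le_refl 0
    · rename_i h
      have hu : 0 < ((A ∪ B).card : ℝ) := by
        have h2 : 0 < (A ∪ B).card := Finset.card_pos.mpr (Finset.nonempty_of_ne_empty h)
        exact_mod_cast h2
      have hi : ((A ∩ B).card : ℝ) ≤ (A ∪ B).card := by
        exact_mod_cast Finset.card_le_card Finset.inter_subset_union
      have : ((A ∩ B).card : ℝ) / (A ∪ B).card ≤ 1 := by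
        rw [div_le_one hu]; exact hi
      linarith
  refine ⟨?_, ?_, ?_, nonneg, ?_⟩
  · intro A
    rw [jaccard]
    split
    · rfl
    · rename_i h
      have hu : ((A ∪ A).card : ℝ) ≠ 0 := by
        have h2 : 0 < (A ∪ A).card := Finset.card_pos.mpr (Finset.nonempty_of_ne_empty h)
        positivity
      simp only [Finset.union_self, Finset.inter_self] at *
      field_simp
      norm_num
  · intro A B h
    by_cases hAB : A ∪ B = ∅
    · rw [Finset.union_eq_empty] at hAB
      rw [hAB.1, hAB.2]
    · rw [jaccard, if_neg hAB] at h
      have hu : 0 < ((A ∪ B).card : ℝ) := by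
        have h2 : 0 < (A ∪ B).card := Finset.card_pos.mpr (Finset.nonempty_of_ne_empty hAB)
        exact_mod_cast h2
      have : ((A ∩ B).card : ℝ) = (A ∪ B).card := by
        field_simp at h
        linarith
      have hcard : (A ∪ B).card ≤ (A ∩ B).card := by exact_mod_cast this.ge
      have heq : A ∩ B = A ∪ B := Finset.eq_of_subset_of_card_le Finset.inter_subset_union hcard
      apply Finset.Subset.antisymm
      · intro x hx
        have : x ∈ A ∩ B := heq ▸ Finset.mem_union_left _ hx
        exact (Finset.mem_inter.mp this).2
      · intro x hx
        have : x ∈ A ∩ B := heq ▸ Finset.mem_union_right _ hx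
        exact (Finset.mem_inter.mp this).1
  · intro A B
    rw [jaccard, jaccard, Finset.union_comm, Finset.inter_comm]
  · intro A B C
    by_cases hAC : A ∪ C = ∅
    · rw [jaccard, if_pos hAC]
      exact add_nonneg (nonneg A B) (nonneg B C)
    by_cases hAB : A ∪ B = ∅
    · obtain ⟨rfl, rfl⟩ := Finset.union_eq_empty.mp hAB
      simp [jaccard]
    by_cases hBC : B ∪ C = ∅
    · obtain ⟨rfl, rfl⟩ := Finset.union_eq_empty.mp hBC
      simp [jaccard]
    rw [jaccard_eq A C hAC, jaccard_eq A B hAB, jaccard_eq B C hBC]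
    have hACu : (1 : ℝ) ≤ (A.card : ℝ) + C.card := by
      have h1 : 0 < (A ∪ C).card := Finset.card_pos.mpr (Finset.nonempty_of_ne_empty hAC)
      have h2 : (A ∪ C).card ≤ A.card + C.card := Finset.card_union_le _ _
      exact_mod_cast h1.trans_le h2
    have hABu : (1 : ℝ) ≤ (A.card : ℝ) + B.card := by
      have h1 : 0 < (A ∪ B).card := Finset.card_pos.mpr (Finset.nonempty_of_ne_empty hAB)
      have h2 : (A ∪ B).card ≤ A.card + B.card := Finset.card_union_le _ _
      exact_mod_cast h1.trans_le h2
    have hBCu : (1 : ℝ) ≤ (B.card : ℝ) + C.card := by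
      have h1 : 0 < (B ∪ C).card := Finset.card_pos.mpr (Finset.nonempty_of_ne_empty hBC)
      have h2 : (B ∪ C).card ≤ B.card + C.card := Finset.card_union_le _ _
      exact_mod_cast h1.trans_le h2
    have hp : (0 : ℝ) ≤ (A ∆ C).card := by positivity
    have hq : (0 : ℝ) ≤ (A ∆ B).card := by positivity
    have hr : (0 : ℝ) ≤ (B ∆ C).card := by positivity
    have h3 : (B.card : ℝ) ≤ C.card + (B ∆ C).card := by
      have := card_le_card_add_symmDiff C B
      rwa [symmDiff_comm] at this
    exact key_ineq (A.card : ℝ) (B.card : ℝ) (C.card : ℝ) _ _ _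
      (by positivity) (by positivity) hq hr
      (by linarith) (by linarith) (by linarith)
      (symmDiff_tri A B C) (card_le_card_add_symmDiff A B) h3
end

section
/- Let G_cmd = (V_cmd, E_cmd) be a finite graph of command nodes and ρ : ℕ → Set(V_cmd) a schedule of command-node activations satisfying: (a) if j ∈ ρ(t) and k ∈ N_j then k ∉ ρ(t) (neighbors never simultaneously active), and (b) every node is active infinitely often. For each node j let τ_j : ℕ → Set(E_j) be a schedule on its local edge set E_j ⊆ E such that τ_j(t) is always a matching in the local graph G_j. Suppose further that whenever j ≠ k and E_j and E_k contain a pair of adjacent edges of G, then jk ∈ E_cmd. Then the merged schedule τ(t) = ∪_{j ∈ ρ(t)} τ_j(t) is a matching in G at every time t. -/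
theorem stmt_13 {V J : Type*} (G : SimpleGraph V) (Gc : SimpleGraph J)
    (E : J → Set (Sym2 V)) (hE : ∀ j, E j ⊆ G.edgeSet)
    (τ : J → ℕ → Set (Sym2 V)) (hτE : ∀ j t, τ j t ⊆ E j)
    -- each local schedule is a matching in the local graph
    (hmatch : ∀ j t, ∀ e ∈ τ j t, ∀ e' ∈ τ j t, e ≠ e' → ¬∃ v, v ∈ e ∧ v ∈ e')
    (ρ : ℕ → Set J)
    -- (a) neighboring command nodes never simultaneously active
    (hnoninter : ∀ t j k, j ∈ ρ t → Gc.Adj j k → k ∉ ρ t)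
    -- (b) every command node active infinitely often
    (hlive : ∀ j, {t : ℕ | j ∈ ρ t}.Infinite)
    -- overlapping jurisdictions are adjacent in the command graph
    (hoverlap : ∀ j k, j ≠ k →
      (∃ e ∈ E j, ∃ e' ∈ E k, ∃ v, v ∈ e ∧ v ∈ e') → Gc.Adj j k) :
    -- the merged schedule is a matching in G at every time
    ∀ t, ∀ e ∈ ⋃ j ∈ ρ t, τ j t, ∀ e' ∈ ⋃ j ∈ ρ t, τ j t,
      e ≠ e' → ¬∃ v, v ∈ e ∧ v ∈ e' := by
  intro t e he e' he' hne ⟨v, hv, hv'⟩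
  simp only [Set.mem_iUnion] at he he'
  obtain ⟨j, hj, hej⟩ := he
  obtain ⟨k, hk, hek⟩ := he'
  by_cases hjk : j = k
  · subst hjk
    exact hmatch j t e hej e' hek hne ⟨v, hv, hv'⟩
  · exact hnoninter t j k hj
      (hoverlap j k hjk ⟨e, hτE j t hej, e', hτE k t hek, v, hv, hv'⟩) hk
end
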